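/- Dual feasibility bound in the dual-fitting analysis of greedy set cover (per-set bound in the max(2, H_g)-approximation theorem): Let S be a finite set with |S| ≤ g for some natural number g ≥ 1, let w ≥ 0 be a real number, and let A_1, …, A_l be pairwise disjoint (possibly empty) sets with A_1 ∪ ⋯ ∪ A_l = S. For 1 ≤ k ≤ l set a_k = |A_k| + |A_{k+1}| + ⋯ + |A_l|. Let y : S → ℝ satisfy 0 ≤ y(j) ≤ w/(H_g · a_k) for every j ∈ A_k and every k. Then ∑_{j∈S} y(j) ≤ w. -/

import Mathlib

/-- The `n`-th harmonic number `H_n = ∑_{i=1}^{n} 1/i`, as a real number. -/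
noncomputable def harmonicNumber (n : ℕ) : ℝ := ∑ i ∈ Finset.Icc 1 n, (1 : ℝ) / i


lemma my_harmonic_mono {m n : ℕ} (h : m ≤ n) : harmonicNumber m ≤ harmonicNumber n := by
  apply Finset.sum_le_sum_of_subset_of_nonneg
  · exact Finset.Icc_subset_Icc le_rfl h
  · intro i _ _; positivity

lemma my_harmonic_pos {n : ℕ} (h : 1 ≤ n) : 0 < harmonicNumber n := by
  have h2 : harmonicNumber 1 ≤ harmonicNumber n := my_harmonic_mono h
  have h1 : harmonicNumber 1 = 1 := by simp [harmonicNumber]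
  linarith

lemma my_harmonic_diff {m n : ℕ} (h : m ≤ n) :
    ((n : ℝ) - m) / n ≤ harmonicNumber n - harmonicNumber m := by
  rcases Nat.eq_zero_or_pos n with hn | hn
  · subst hn; interval_cases m; simp
  have hsum : harmonicNumber n = harmonicNumber m + ∑ i ∈ Finset.Icc (m+1) n, (1 : ℝ) / i := by
    unfold harmonicNumber
    rw [← Finset.sum_union (by
      rw [Finset.disjoint_left]; intro x hx hx'
      simp only [Finset.mem_Icc] at hx hx'; omega)]
    congr 1
    ext x; simp only [Finset.mem_union, Finset.mem_Icc]; omega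
  have hcard : (Finset.Icc (m+1) n).card = n - m := by rw [Nat.card_Icc]; omega
  have hbound : (Finset.Icc (m+1) n).card • ((1:ℝ)/n)
      ≤ ∑ i ∈ Finset.Icc (m+1) n, (1 : ℝ) / i := by
    apply Finset.card_nsmul_le_sum
    intro i hi
    simp only [Finset.mem_Icc] at hi
    apply one_div_le_one_div_of_le
    · have : 0 < i := by omega
      exact_mod_cast this
    · exact_mod_cast hi.2
  rw [hcard, nsmul_eq_mul] at hbound
  have hc : ((n - m : ℕ) : ℝ) = (n : ℝ) - m := by push_cast [Nat.cast_sub h]; ring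
  rw [hc] at hbound
  have : ((n:ℝ) - m) * (1/n) = ((n:ℝ) - m)/n := by ring
  linarith [hsum, this ▸ hbound]

lemma icc_insert {k l : ℕ} (h : k ≤ l) : Finset.Icc k l = insert k (Finset.Icc (k+1) l) := by
  ext x; simp only [Finset.mem_insert, Finset.mem_Icc]; omega

lemma aux_sum (c : ℕ → ℕ) (l : ℕ) : ∀ k,
    ∑ i ∈ Finset.Icc k l, (c i : ℝ) / (∑ r ∈ Finset.Icc i l, (c r : ℝ))
      ≤ harmonicNumber (∑ r ∈ Finset.Icc k l, c r) := by
  intro k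
  induction' hn : l + 1 - k with n ih generalizing k
  · have hk : l < k := by omega
    rw [Finset.Icc_eq_empty (by omega)]
    simp [harmonicNumber]
  · have hk : k ≤ l := by omega
    have ihk := ih (k+1) (by omega)
    set a1 := ∑ r ∈ Finset.Icc (k+1) l, c r with ha1
    have hsplit : ∑ r ∈ Finset.Icc k l, c r = c k + a1 := by
      rw [icc_insert hk, Finset.sum_insert (by simp)]
    have hreal : (∑ r ∈ Finset.Icc k l, (c r : ℝ)) = ((c k + a1 : ℕ) : ℝ) := by
      rw [← hsplit]; push_cast; rfl
    have h1 : ∑ i ∈ Finset.Icc k l, (c i : ℝ) / (∑ r ∈ Finset.Icc i l, (c r : ℝ))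
        = (c k : ℝ) / (∑ r ∈ Finset.Icc k l, (c r : ℝ))
          + ∑ i ∈ Finset.Icc (k+1) l, (c i : ℝ) / (∑ r ∈ Finset.Icc i l, (c r : ℝ)) := by
      conv_lhs => rw [icc_insert hk]
      rw [Finset.sum_insert (by simp)]
    have hkey : (c k : ℝ) / (∑ r ∈ Finset.Icc k l, (c r : ℝ))
        ≤ harmonicNumber (c k + a1) - harmonicNumber a1 := by
      have hd := my_harmonic_diff (m := a1) (n := c k + a1) (by omega)
      have : ((c k + a1 : ℕ) : ℝ) - (a1 : ℝ) = (c k : ℝ) := by push_cast; ring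
      rw [this] at hd
      rw [hreal]
      exact hd
    rw [h1, hsplit]
    linarith

/-- Dual feasibility bound in the dual-fitting analysis of greedy set cover: if
`S = A_1 ∪ ⋯ ∪ A_l` (pairwise disjoint), `|S| ≤ g`, `a_k = |A_k| + ⋯ + |A_l|`,
and `0 ≤ y(j) ≤ w/(H_g · a_k)` for every `j ∈ A_k`, then `∑_{j∈S} y(j) ≤ w`. -/
theorem dual_fitting_per_set_bound {V : Type*} [DecidableEq V]
    (S : Finset V) (g : ℕ) (hg : 1 ≤ g) (hSg : S.card ≤ g)
    (w : ℝ) (hw : 0 ≤ w) (l : ℕ) (A : ℕ → Finset V)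
    (hdisj : ∀ k ∈ Finset.Icc 1 l, ∀ k' ∈ Finset.Icc 1 l, k ≠ k' →
      Disjoint (A k) (A k'))
    (hunion : (Finset.Icc 1 l).biUnion A = S)
    (y : V → ℝ)
    (hy : ∀ k ∈ Finset.Icc 1 l, ∀ j ∈ A k,
      0 ≤ y j ∧ y j ≤ w / (harmonicNumber g * ∑ r ∈ Finset.Icc k l, (A r).card)) :
    ∑ j ∈ S, y j ≤ w := by
  have hpd : Set.PairwiseDisjoint (↑(Finset.Icc 1 l) : Set ℕ) A := by
    intro k hk k' hk' hne
    exact hdisj k (by simpa using hk) k' (by simpa using hk') hne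
  have hHg : 0 < harmonicNumber g := my_harmonic_pos hg
  set c : ℕ → ℕ := fun k => (A k).card with hc
  have hcardS : ∑ k ∈ Finset.Icc 1 l, c k = S.card := by
    rw [← hunion, Finset.card_biUnion]
    intro k hk k' hk' hne
    exact hdisj k hk k' hk' hne
  calc ∑ j ∈ S, y j = ∑ k ∈ Finset.Icc 1 l, ∑ j ∈ A k, y j := by
        rw [← hunion, Finset.sum_biUnion hpd]
    _ ≤ ∑ k ∈ Finset.Icc 1 l,
          (c k : ℝ) * (w / (harmonicNumber g * ∑ r ∈ Finset.Icc k l, (c r : ℝ))) := by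
        apply Finset.sum_le_sum
        intro k hk
        have h1 : ∑ j ∈ A k, y j
            ≤ (A k).card • (w / (harmonicNumber g * ((∑ r ∈ Finset.Icc k l, (A r).card : ℕ) : ℝ))) :=
          Finset.sum_le_card_nsmul _ _ _ (fun j hj => (hy k hk j hj).2)
        rw [nsmul_eq_mul] at h1
        push_cast at h1 ⊢
        exact h1
    _ = (w / harmonicNumber g) * ∑ k ∈ Finset.Icc 1 l,
          (c k : ℝ) / (∑ r ∈ Finset.Icc k l, (c r : ℝ)) := by
        rw [Finset.mul_sum]
        apply Finset.sum_congr rfl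
        intro k _
        ring
    _ ≤ (w / harmonicNumber g) * harmonicNumber g := by
        apply mul_le_mul_of_nonneg_left _ (by positivity)
        calc ∑ k ∈ Finset.Icc 1 l, (c k : ℝ) / (∑ r ∈ Finset.Icc k l, (c r : ℝ))
            ≤ harmonicNumber (∑ r ∈ Finset.Icc 1 l, c r) := aux_sum c l 1
          _ ≤ harmonicNumber g := my_harmonic_mono (by rw [hcardS]; exact hSg)
    _ = w := by field_simp
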